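/- If B and C are two bases of the same lattice L and C is LLL-reduced, then max_i ‖c_i*‖ ≤ (4/3 + ε)^{(N−1)/4} · max_i ‖b_i*‖. -/

import Mathlib

/-- Gram–Schmidt orthogonalization for families indexed by `Fin M`. -/
noncomputable def gramSchmidtFin {N M : ℕ} (b : Fin M → EuclideanSpace ℝ (Fin N)) :
    Fin M → EuclideanSpace ℝ (Fin N) :=
  @InnerProductSpace.gramSchmidt ℝ _ _ _ _ (Fin M) _ _ ((Fin.Lt.isWellOrder M).toIsWellFounded) b

section Wrappers
open Finset
variable {N M : ℕ}
local notation "E" => EuclideanSpace ℝ (Fin N)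
local notation "⟪" x ", " y "⟫" => @inner ℝ _ _ x y

lemma gsF_def' (f : Fin M → E) (n : Fin M) :
    f n = gramSchmidtFin f n + ∑ i ∈ Iio n,
      ((Submodule.starProjection (ℝ ∙ gramSchmidtFin f i) (f n)) : E) :=
  @InnerProductSpace.gramSchmidt_def' ℝ _ _ _ _ (Fin M) _ _ ((Fin.Lt.isWellOrder M).toIsWellFounded) f n

lemma gsF_orthogonal (f : Fin M → E) {a b : Fin M} (h : a ≠ b) :
    ⟪gramSchmidtFin f a, gramSchmidtFin f b⟫ = 0 :=
  @InnerProductSpace.gramSchmidt_orthogonal ℝ _ _ _ _ (Fin M) _ _ ((Fin.Lt.isWellOrder M).toIsWellFounded) f a b h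

lemma span_gsF_Iio (f : Fin M → E) (n : Fin M) :
    Submodule.span ℝ (gramSchmidtFin f '' Set.Iio n) = Submodule.span ℝ (f '' Set.Iio n) :=
  @InnerProductSpace.span_gramSchmidt_Iio ℝ _ _ _ _ (Fin M) _ _ ((Fin.Lt.isWellOrder M).toIsWellFounded) f n

/-- the projection part lies in the span of earlier vectors -/
lemma gsF_sub_mem (f : Fin M → E) (n : Fin M) :
    f n - gramSchmidtFin f n ∈ Submodule.span ℝ (f '' Set.Iio n) := by
  rw [← span_gsF_Iio]
  have h := gsF_def' f n
  have : f n - gramSchmidtFin f n =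
      ∑ i ∈ Iio n, ((Submodule.starProjection (ℝ ∙ gramSchmidtFin f i) (f n)) : E) := by
    conv_lhs => rw [h]
    rw [add_sub_cancel_left]
  rw [this]
  refine Submodule.sum_mem _ fun i hi => ?_
  have hmem : ((Submodule.starProjection (ℝ ∙ gramSchmidtFin f i) (f n)) : E) ∈
      (ℝ ∙ gramSchmidtFin f i) := Submodule.starProjection_apply_mem _ _
  refine Submodule.span_mono ?_ hmem
  · intro x hx
    rw [Set.mem_singleton_iff] at hx
    exact ⟨i, Finset.mem_Iio.mp hi, hx.symm⟩

/-- gs f n is orthogonal to everything in the span of earlier vectors -/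
lemma gsF_inner_span (f : Fin M → E) (n : Fin M) {x : E}
    (hx : x ∈ Submodule.span ℝ (f '' Set.Iio n)) : ⟪gramSchmidtFin f n, x⟫ = 0 := by
  rw [← span_gsF_Iio] at hx
  induction hx using Submodule.span_induction with
  | mem y hy =>
    obtain ⟨i, hin, rfl⟩ := hy
    exact gsF_orthogonal f (ne_of_gt hin)
  | zero => exact inner_zero_right _
  | add y z _ _ hy hz => rw [inner_add_right, hy, hz, add_zero]
  | smul a y _ hy => rw [real_inner_smul_right, hy, mul_zero]

/-- distance bound -/
lemma gsF_norm_le (f : Fin M → E) (n : Fin M) {u : E}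
    (hu : u ∈ Submodule.span ℝ (f '' Set.Iio n)) :
    ‖gramSchmidtFin f n‖ ≤ ‖f n - u‖ := by
  have hdec : f n - u = gramSchmidtFin f n + ((f n - gramSchmidtFin f n) - u) := by abel
  have hmem : (f n - gramSchmidtFin f n) - u ∈ Submodule.span ℝ (f '' Set.Iio n) :=
    Submodule.sub_mem _ (gsF_sub_mem f n) hu
  have horth := gsF_inner_span f n hmem
  have hsq : ‖f n - u‖ ^ 2 = ‖gramSchmidtFin f n‖ ^ 2 + ‖(f n - gramSchmidtFin f n) - u‖ ^ 2 := by
    rw [hdec, norm_add_sq_real, horth]; ring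
  have h2 : ‖gramSchmidtFin f n‖ ^ 2 ≤ ‖f n - u‖ ^ 2 := by nlinarith [sq_nonneg ‖(f n - gramSchmidtFin f n) - u‖]
  exact (pow_le_pow_iff_left₀ (norm_nonneg _) (norm_nonneg _) two_ne_zero).mp h2

lemma gsF_ne_zero_of_not_mem {f : Fin M → E} {n : Fin M}
    (h : f n ∉ Submodule.span ℝ (f '' Set.Iio n)) : gramSchmidtFin f n ≠ 0 := by
  intro h0
  apply h
  have := gsF_sub_mem f n
  rwa [h0, sub_zero] at this

/-- gramSchmidt only depends on the prefix -/
lemma gsF_congr_prefix {f h : Fin M → E} (n : Fin M) (hfh : ∀ j : Fin M, j ≤ n → f j = h j) :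
    gramSchmidtFin f n = gramSchmidtFin h n := by
  have key : ∀ d : ℕ, ∀ n : Fin M, n.val < d → (∀ j : Fin M, j ≤ n → f j = h j) →
      gramSchmidtFin f n = gramSchmidtFin h n := by
    intro d
    induction d with
    | zero => intro n hn; exact absurd hn (Nat.not_lt_zero _)
    | succ d IH =>
      intro n hn hfh
      rw [show gramSchmidtFin f n = _ from
          @InnerProductSpace.gramSchmidt_def ℝ _ _ _ _ (Fin M) _ _ ((Fin.Lt.isWellOrder M).toIsWellFounded) f n,
        show gramSchmidtFin h n = _ from
          @InnerProductSpace.gramSchmidt_def ℝ _ _ _ _ (Fin M) _ _ ((Fin.Lt.isWellOrder M).toIsWellFounded) h n]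
      rw [hfh n le_rfl]
      congr 1
      refine Finset.sum_congr rfl fun i hi => ?_
      have hlt := Finset.mem_Iio.mp hi
      have hiv : i.val < d := by have h2 : i.val < n.val := hlt; omega
      exact congrArg (fun v : E => ((Submodule.starProjection (ℝ ∙ v) (h n)) : E))
        (IH i hiv fun j hj => hfh j (hj.trans hlt.le))
  exact key (n.val + 1) n (Nat.lt_succ_self _) hfh

lemma gsF_def'' (f : Fin M → E) (n : Fin M) :
    f n = gramSchmidtFin f n + ∑ i ∈ Iio n,
      (⟪gramSchmidtFin f i, f n⟫ / (‖gramSchmidtFin f i‖ : ℝ) ^ 2) • gramSchmidtFin f i :=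
  @InnerProductSpace.gramSchmidt_def'' ℝ _ _ _ _ (Fin M) _ _ ((Fin.Lt.isWellOrder M).toIsWellFounded) f n

lemma gsF_ne_zero {f : Fin M → E} (n : Fin M) (h : LinearIndependent ℝ f) :
    gramSchmidtFin f n ≠ 0 :=
  @InnerProductSpace.gramSchmidt_ne_zero ℝ _ _ _ _ (Fin M) _ _ ((Fin.Lt.isWellOrder M).toIsWellFounded) f n h

end Wrappers


section Gram
open Finset Matrix
variable {N M : ℕ}
local notation "E" => EuclideanSpace ℝ (Fin N)
local notation "⟪" x ", " y "⟫" => @inner ℝ _ _ x y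

noncomputable def gramM {N M : ℕ} (v : Fin M → EuclideanSpace ℝ (Fin N)) :
    Matrix (Fin M) (Fin M) ℝ :=
  Matrix.of fun i j => ⟪v i, v j⟫

lemma det_gramM (v : Fin M → E) :
    (gramM v).det = ∏ i, ‖gramSchmidtFin v i‖ ^ 2 := by
  set g := gramSchmidtFin v with hg
  set T : Matrix (Fin M) (Fin M) ℝ :=
    Matrix.of (fun i a => if a = i then (1:ℝ) else if a < i then ⟪g a, v i⟫ / ‖g a‖ ^ 2 else 0)
    with hT
  have hv : ∀ i, v i = ∑ a, T i a • g a := by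
    intro i
    rw [← Finset.add_sum_erase _ _ (Finset.mem_univ i)]
    have hTii : T i i = 1 := if_pos rfl
    have hstep : ∀ a ∈ Finset.univ.erase i,
        T i a • g a = if a < i then (⟪g a, v i⟫ / ‖g a‖ ^ 2) • g a else 0 := by
      intro a ha
      have hne : a ≠ i := Finset.ne_of_mem_erase ha
      simp only [hT, Matrix.of_apply, if_neg hne]
      split_ifs with h
      · rfl
      · exact zero_smul _ _
    rw [Finset.sum_congr rfl hstep, ← Finset.sum_filter]
    have hset : (Finset.univ.erase i).filter (· < i) = Finset.Iio i := by
      ext a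
      simp only [Finset.mem_filter, Finset.mem_erase, Finset.mem_univ, Finset.mem_Iio, true_and,
        and_iff_right_iff_imp]
      exact fun h => ⟨ne_of_lt h, trivial⟩
    rw [hset, hTii, one_smul]
    exact gsF_def'' v i
  have hmat : gramM v = T * Matrix.diagonal (fun a => ‖g a‖ ^ 2) * Tᵀ := by
    ext i j
    have lhs : gramM v i j = ∑ a, T i a * (T j a * ‖g a‖ ^ 2) := by
      show ⟪v i, v j⟫ = _
      rw [hv i, hv j, sum_inner]
      refine Finset.sum_congr rfl fun a _ => ?_
      rw [inner_sum]
      have hsum : (∑ b, ⟪T i a • g a, T j b • g b⟫) = ⟪T i a • g a, T j a • g a⟫ := by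
        refine Finset.sum_eq_single_of_mem a (Finset.mem_univ a) fun b _ hb => ?_
        rw [real_inner_smul_left, real_inner_smul_right, gsF_orthogonal v (Ne.symm hb)]
        ring
      rw [hsum, real_inner_smul_left, real_inner_smul_right, real_inner_self_eq_norm_sq]
    rw [lhs]
    rw [Matrix.mul_apply]
    refine Finset.sum_congr rfl fun a _ => ?_
    rw [Matrix.mul_diagonal, Matrix.transpose_apply]
    ring
  have hdetT : T.det = 1 := by
    have htri : T.BlockTriangular OrderDual.toDual := by
      intro i j hij
      have h1 : i < j := hij
      show (if j = i then (1:ℝ) else if j < i then _ else 0) = 0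
      rw [if_neg (ne_of_gt h1), if_neg (not_lt_of_gt h1)]
    rw [Matrix.det_of_lowerTriangular T htri]
    refine Finset.prod_eq_one fun i _ => ?_
    exact if_pos rfl
  rw [hmat, Matrix.det_mul, Matrix.det_mul, Matrix.det_transpose, hdetT, Matrix.det_diagonal]
  ring

lemma det_gramM_le {v w : Fin M → E} (hw : ∀ t, w t ∈ Submodule.span ℤ (Set.range v))
    (hpos : 0 < (gramM w).det) : (gramM v).det ≤ (gramM w).det := by
  choose A hA using fun t => (Submodule.mem_span_range_iff_exists_fun ℤ).mp (hw t)
  set Ar : Matrix (Fin M) (Fin M) ℝ := (Int.castRingHom ℝ).mapMatrix (Matrix.of A) with hAr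
  have hmat : gramM w = Ar * gramM v * Arᵀ := by
    ext t s
    show ⟪w t, w s⟫ = _
    rw [← hA t, ← hA s]
    have hz : ∀ (t : Fin M), (∑ a, A t a • v a) = ∑ a, ((A t a : ℝ)) • v a := by
      intro t
      exact Finset.sum_congr rfl fun a _ => (Int.cast_smul_eq_zsmul ℝ (A t a) (v a)).symm
    rw [hz t, hz s, inner_sum, Matrix.mul_apply]
    refine Finset.sum_congr rfl fun j _ => ?_
    rw [real_inner_smul_right, sum_inner, Matrix.mul_apply, Matrix.transpose_apply]
    have hin : (∑ a, ⟪((A t a : ℝ)) • v a, v j⟫) = ∑ a, (A t a : ℝ) * ⟪v a, v j⟫ :=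
      Finset.sum_congr rfl fun a _ => real_inner_smul_left _ _ _
    rw [hin, Finset.mul_sum, Finset.sum_mul]
    refine Finset.sum_congr rfl fun a _ => ?_
    show (A s j : ℝ) * ((A t a : ℝ) * ⟪v a, v j⟫) = Ar t a * gramM v a j * Ar s j
    show (A s j : ℝ) * ((A t a : ℝ) * ⟪v a, v j⟫) = (A t a : ℝ) * ⟪v a, v j⟫ * (A s j : ℝ)
    ring
  have hdet : (gramM w).det = (((Matrix.of A).det : ℤ) : ℝ) ^ 2 * (gramM v).det := by
    rw [hmat, Matrix.det_mul, Matrix.det_mul, Matrix.det_transpose]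
    have hAr2 : Ar.det = (((Matrix.of A).det : ℤ) : ℝ) :=
      ((Int.castRingHom ℝ).map_det (Matrix.of A)).symm
    rw [hAr2]; ring
  set d : ℤ := (Matrix.of A).det with hd
  have hd0 : d ≠ 0 := by
    intro h0
    rw [h0] at hdet
    norm_num at hdet
    rw [hdet] at hpos
    exact lt_irrefl 0 hpos
  have h1 : (1:ℝ) ≤ (d:ℝ)^2 := by
    have h2 : (1:ℤ) ≤ d^2 := by nlinarith [Int.one_le_abs hd0, sq_abs d]
    exact_mod_cast h2
  have hvd : (gramM v).det = (gramM w).det / (d:ℝ)^2 := by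
    rw [hdet]
    field_simp
  rw [hvd]
  exact div_le_self hpos.le h1
end Gram

section Greedy
open Finset
variable {N : ℕ}
local notation "E" => EuclideanSpace ℝ (Fin N)

/-- Greedy selection of `b`-vectors extending the first `k` vectors of `c`. -/
lemma exists_greedy (b c : Fin N → E) (hb : LinearIndependent ℝ b) (k : Fin N) :
    ∃ u : Fin N → E, (∀ t : Fin N, t.val < k.val → u t = c t) ∧
      ∀ t : Fin N, k.val ≤ t.val →
        ∃ j : Fin N, u t = b j ∧ b j ∉ Submodule.span ℝ (u '' Set.Iio t) ∧
          ∀ a : Fin N, a < j → b a ∈ Submodule.span ℝ (u '' Set.Iio t) := by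
  classical
  have hne : Nonempty (Fin N) := ⟨k⟩
  have hspanb : Submodule.span ℝ (Set.range b) = ⊤ :=
    hb.span_eq_top_of_card_eq_finrank (by simp [finrank_euclideanSpace_fin])
  have hdim : ∀ (u : Fin N → E) (t : Fin N), ∃ j : Fin N,
      b j ∉ Submodule.span ℝ (u '' Set.Iio t) := by
    intro u t
    by_contra h
    push_neg at h
    have htop : Submodule.span ℝ (u '' Set.Iio t) = ⊤ := by
      rw [eq_top_iff, ← hspanb, Submodule.span_le]
      rintro x ⟨j, rfl⟩
      exact h j
    have h1 : Module.finrank ℝ (Submodule.span ℝ (u '' Set.Iio t)) ≤ t.val := by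
      have himg : u '' Set.Iio t = ↑((Finset.Iio t).image u) := by
        rw [Finset.coe_image, Finset.coe_Iio]
      rw [himg]
      calc Module.finrank ℝ (Submodule.span ℝ (((Finset.Iio t).image u : Finset E) : Set E))
          ≤ ((Finset.Iio t).image u).card := finrank_span_finset_le_card _
        _ ≤ (Finset.Iio t).card := Finset.card_image_le
        _ = t.val := by rw [Fin.card_Iio]
    rw [htop] at h1
    have h2 : Module.finrank ℝ (⊤ : Submodule ℝ E) = N := by
      rw [finrank_top, finrank_euclideanSpace_fin]
    have h3 := t.isLt
    omega
  -- inductive construction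
  have key : ∀ dd : ℕ, dd ≤ N → ∃ u : Fin N → E,
      (∀ t : Fin N, t.val < dd → t.val < k.val → u t = c t) ∧
      (∀ t : Fin N, t.val < dd → k.val ≤ t.val →
        ∃ j : Fin N, u t = b j ∧ b j ∉ Submodule.span ℝ (u '' Set.Iio t) ∧
          ∀ a : Fin N, a < j → b a ∈ Submodule.span ℝ (u '' Set.Iio t)) := by
    intro dd
    induction dd with
    | zero => exact fun _ => ⟨c, fun t ht _ => absurd ht (Nat.not_lt_zero _),
        fun t ht _ => absurd ht (Nat.not_lt_zero _)⟩
    | succ dd IH =>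
      intro hdd
      obtain ⟨u, hu1, hu2⟩ := IH (Nat.le_of_succ_le hdd)
      have hddN : dd < N := hdd
      set td : Fin N := ⟨dd, hddN⟩ with htd
      have himg : ∀ (x : E) (t : Fin N), t ≤ td →
          (Function.update u td x) '' Set.Iio t = u '' Set.Iio t := by
        intro x t ht
        apply Set.image_congr
        intro a ha
        exact Function.update_of_ne (ne_of_lt (lt_of_lt_of_le ha ht)) x u
      by_cases hdk : dd < k.val
      · refine ⟨Function.update u td (c td), ?_, ?_⟩
        · intro t ht1 ht2
          by_cases htt : t = td
          · rw [htt, Function.update_self]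
          · have : t.val < dd := by
              have : t.val ≠ dd := fun h => htt (Fin.ext h)
              omega
            rw [Function.update_of_ne htt, hu1 t this ht2]
        · intro t ht1 ht2
          have htlt : t.val < dd := by
            have : t.val ≠ dd := by intro h; omega
            omega
          obtain ⟨j, hj1, hj2, hj3⟩ := hu2 t htlt ht2
          have htne : t ≠ td := fun h => by rw [h] at htlt; omega
          have hsp : (Function.update u td (c td)) '' Set.Iio t = u '' Set.Iio t :=
            himg _ t (le_of_lt (by exact htlt : t.val < td.val))
          exact ⟨j, by rw [Function.update_of_ne htne, hj1], by rw [hsp]; exact hj2,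
            fun a ha => by rw [hsp]; exact hj3 a ha⟩
      · -- dd ≥ k : pick the least j with b j not in the span
        have hks : k.val ≤ dd := le_of_not_gt hdk
        set V := Submodule.span ℝ (u '' Set.Iio td) with hV
        have hSne : (Finset.univ.filter (fun j : Fin N => b j ∉ V)).Nonempty := by
          obtain ⟨j, hj⟩ := hdim u td
          exact ⟨j, Finset.mem_filter.mpr ⟨Finset.mem_univ _, hj⟩⟩
        set j0 := (Finset.univ.filter (fun j : Fin N => b j ∉ V)).min' hSne with hj0
        have hj0mem : b j0 ∉ V := by
          have := Finset.min'_mem _ hSne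
          exact (Finset.mem_filter.mp this).2
        have hj0min : ∀ a : Fin N, a < j0 → b a ∈ V := by
          intro a ha
          by_contra hmem
          have : j0 ≤ a := Finset.min'_le _ a (Finset.mem_filter.mpr ⟨Finset.mem_univ _, hmem⟩)
          exact absurd ha (not_lt_of_ge this)
        refine ⟨Function.update u td (b j0), ?_, ?_⟩
        · intro t ht1 ht2
          have htne : t ≠ td := by
            intro h; rw [h] at ht2; simp only [htd] at ht2; omega
          have htlt : t.val < dd := by
            have : t.val ≠ dd := fun h => htne (Fin.ext h)
            omega
          rw [Function.update_of_ne htne, hu1 t htlt ht2]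
        · intro t ht1 ht2
          by_cases htt : t = td
          · have hsp : (Function.update u td (b j0)) '' Set.Iio t = u '' Set.Iio t :=
              himg _ t (le_of_eq htt)
            refine ⟨j0, ?_, ?_, ?_⟩
            · rw [htt]; exact Function.update_self _ _ _
            · rw [hsp, htt]; exact hj0mem
            · intro a ha; rw [hsp, htt]; exact hj0min a ha
          · have htlt : t.val < dd := by
              have : t.val ≠ dd := fun h => htt (Fin.ext h)
              omega
            obtain ⟨j, hj1, hj2, hj3⟩ := hu2 t htlt ht2
            have hsp : (Function.update u td (b j0)) '' Set.Iio t = u '' Set.Iio t :=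
              himg _ t (le_of_lt (by exact htlt : t.val < td.val))
            exact ⟨j, by rw [Function.update_of_ne htt, hj1], by rw [hsp]; exact hj2,
              fun a ha => by rw [hsp]; exact hj3 a ha⟩
  obtain ⟨u, hu1, hu2⟩ := key N le_rfl
  exact ⟨u, fun t ht => hu1 t t.isLt ht, fun t ht => hu2 t t.isLt ht⟩
end Greedy


/-- If `b` and `c` are two bases of the same lattice and `c` is LLL-reduced, then
`max ‖c i*‖ ≤ (4/3+ε)^((N−1)/4) · max ‖b i*‖`. -/
theorem LLL_basis_relative_bound (N : ℕ) (hN : 1 ≤ N) (ε : ℝ) (hε : 0 < ε)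
    (b c : Fin N → EuclideanSpace ℝ (Fin N))
    (hb : LinearIndependent ℝ b) (hc : LinearIndependent ℝ c)
    (hsame : Submodule.span ℤ (Set.range b) = Submodule.span ℤ (Set.range c))
    (bs cs : Fin N → EuclideanSpace ℝ (Fin N))
    (hbs : bs = gramSchmidtFin b) (hcs : cs = gramSchmidtFin c)
    (hLLL : ∀ i : Fin N, ∀ h : i.val + 1 < N,
      ‖cs i‖ ≤ Real.sqrt (4 / 3 + ε) * ‖cs ⟨i.val + 1, h⟩‖)
    (hNe : (Finset.univ : Finset (Fin N)).Nonempty) :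
    ∀ i : Fin N, ‖cs i‖ ≤
      (4 / 3 + ε) ^ ((N - 1 : ℝ) / 4) * Finset.univ.sup' hNe fun j => ‖bs j‖ := by
  classical
  intro k
  set α : ℝ := 4 / 3 + ε with hαdef
  have hα1 : (1:ℝ) < α := by rw [hαdef]; norm_num; linarith
  have hα0 : (0:ℝ) < α := lt_trans one_pos hα1
  set Mx : ℝ := Finset.univ.sup' hNe (fun j => ‖bs j‖) with hMxdef
  have hbsne : ∀ t, bs t ≠ 0 := fun t => by rw [hbs]; exact gsF_ne_zero t hb
  have hcsne : ∀ t, cs t ≠ 0 := fun t => by rw [hcs]; exact gsF_ne_zero t hc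
  have hMpos : 0 < Mx :=
    lt_of_lt_of_le (norm_pos_iff.mpr (hbsne k))
      (Finset.le_sup' (fun j => ‖bs j‖) (Finset.mem_univ k))
  -- Step 1 : the chain inequality from the LLL condition
  have hchain : ∀ j : Fin N, k.val ≤ j.val →
      ‖cs k‖ ≤ Real.sqrt α ^ (j.val - k.val) * ‖cs j‖ := by
    have base : ∀ d : ℕ, ∀ j : Fin N, j.val = k.val + d →
        ‖cs k‖ ≤ Real.sqrt α ^ d * ‖cs j‖ := by
      intro d
      induction d with
      | zero =>
        intro j hj
        have : j = k := Fin.ext (by omega)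
        rw [this, pow_zero, one_mul]
      | succ d IH =>
        intro j hj
        have hjN := j.isLt
        have hj'lt : k.val + d < N := by omega
        set j' : Fin N := ⟨k.val + d, hj'lt⟩ with hj'def
        have hj'v : j'.val = k.val + d := rfl
        have h1 := IH j' rfl
        have h2 : j'.val + 1 < N := by omega
        have hjj : (⟨j'.val + 1, h2⟩ : Fin N) = j := Fin.ext (by simp [hj'v]; omega)
        have h3 := hLLL j' h2
        rw [hjj] at h3
        calc ‖cs k‖ ≤ Real.sqrt α ^ d * ‖cs j'‖ := h1
          _ ≤ Real.sqrt α ^ d * (Real.sqrt α * ‖cs j‖) :=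
            mul_le_mul_of_nonneg_left h3 (pow_nonneg (Real.sqrt_nonneg _) _)
          _ = Real.sqrt α ^ (d+1) * ‖cs j‖ := by ring
    intro j hj
    exact base (j.val - k.val) j (by omega)
  -- Step 2 : greedy completion of the first k vectors of c by vectors of b
  obtain ⟨u, hu1, hu2⟩ := exists_greedy b c hb k
  have hgsu_lt : ∀ t : Fin N, t.val < k.val → gramSchmidtFin u t = cs t := by
    intro t ht
    rw [hcs]
    exact gsF_congr_prefix t fun j hj =>
      hu1 j (lt_of_le_of_lt (show j.val ≤ t.val from hj) ht)
  have hgsu_ge : ∀ t : Fin N, k.val ≤ t.val →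
      gramSchmidtFin u t ≠ 0 ∧ ‖gramSchmidtFin u t‖ ≤ Mx := by
    intro t ht
    obtain ⟨j, huj, hnot, hmem⟩ := hu2 t ht
    constructor
    · apply gsF_ne_zero_of_not_mem
      rw [huj]; exact hnot
    · have hsub : b j - bs j ∈ Submodule.span ℝ (b '' Set.Iio j) := by
        rw [hbs]; exact gsF_sub_mem b j
      have hsub2 : b j - bs j ∈ Submodule.span ℝ (u '' Set.Iio t) := by
        refine Submodule.span_le.mpr ?_ hsub
        rintro x ⟨a, ha, rfl⟩
        exact hmem a ha
      have h4 := gsF_norm_le u t hsub2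
      rw [huj, sub_sub_cancel] at h4
      exact h4.trans (Finset.le_sup' (fun j => ‖bs j‖) (Finset.mem_univ j))
  -- Step 3 : integrality and Gram determinants
  have huspan : ∀ t, u t ∈ Submodule.span ℤ (Set.range c) := by
    intro t
    by_cases ht : t.val < k.val
    · rw [hu1 t ht]; exact Submodule.subset_span ⟨t, rfl⟩
    · obtain ⟨j, huj, -, -⟩ := hu2 t (le_of_not_gt ht)
      rw [huj, ← hsame]
      exact Submodule.subset_span ⟨j, rfl⟩
  have hposu : 0 < (gramM u).det := by
    rw [det_gramM]
    refine Finset.prod_pos fun t _ => ?_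
    rcases lt_or_ge t.val k.val with ht | ht
    · rw [hgsu_lt t ht]
      exact pow_pos (norm_pos_iff.mpr (hcsne t)) 2
    · exact pow_pos (norm_pos_iff.mpr (hgsu_ge t ht).1) 2
  have hdet_le : (gramM c).det ≤ (gramM u).det := det_gramM_le huspan hposu
  rw [det_gramM, det_gramM] at hdet_le
  set p : Fin N → Prop := fun t => t.val < k.val with hpdef
  set r := (Finset.univ.filter (fun t => ¬ p t)).card with hrdef
  have hPpos : 0 < ∏ i ∈ Finset.univ.filter p, ‖cs i‖^2 :=
    Finset.prod_pos fun i _ => pow_pos (norm_pos_iff.mpr (hcsne i)) 2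
  have hsplitc : (∏ i, ‖gramSchmidtFin c i‖^2)
      = (∏ i ∈ Finset.univ.filter p, ‖cs i‖^2) *
        (∏ i ∈ Finset.univ.filter (fun t => ¬ p t), ‖cs i‖^2) := by
    rw [Finset.prod_filter_mul_prod_filter_not]
    refine Finset.prod_congr rfl fun i _ => ?_
    rw [hcs]
  have hsplitu : (∏ i, ‖gramSchmidtFin u i‖^2)
      ≤ (∏ i ∈ Finset.univ.filter p, ‖cs i‖^2) * (Mx^2) ^ r := by
    rw [← Finset.prod_filter_mul_prod_filter_not Finset.univ p]
    have he1 : (∏ i ∈ Finset.univ.filter p, ‖gramSchmidtFin u i‖^2)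
        = ∏ i ∈ Finset.univ.filter p, ‖cs i‖^2 := by
      refine Finset.prod_congr rfl fun i hi => ?_
      rw [hgsu_lt i (Finset.mem_filter.mp hi).2]
    have he2 : (∏ i ∈ Finset.univ.filter (fun t => ¬ p t), ‖gramSchmidtFin u i‖^2)
        ≤ (Mx^2) ^ r := by
      rw [hrdef, ← Finset.prod_const]
      refine Finset.prod_le_prod (fun i _ => sq_nonneg _) fun i hi => ?_
      have hki : k.val ≤ i.val := le_of_not_gt (Finset.mem_filter.mp hi).2
      exact pow_le_pow_left₀ (norm_nonneg _) (hgsu_ge i hki).2 2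
    rw [he1]
    exact mul_le_mul_of_nonneg_left he2 (le_of_lt hPpos)
  have hkey : (∏ i ∈ Finset.univ.filter (fun t => ¬ p t), ‖cs i‖^2) ≤ (Mx^2)^r := by
    rw [hsplitc] at hdet_le
    have h5 := hdet_le.trans hsplitu
    exact le_of_mul_le_mul_left h5 hPpos
  have hprod_norm : (∏ i ∈ Finset.univ.filter (fun t => ¬ p t), ‖cs i‖) ≤ Mx^r := by
    refine (pow_le_pow_iff_left₀ (Finset.prod_nonneg fun i _ => norm_nonneg _)
      (by positivity) (two_ne_zero)).mp ?_
    rw [← Finset.prod_pow]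
    calc (∏ i ∈ Finset.univ.filter (fun t => ¬ p t), ‖cs i‖^2) ≤ (Mx^2)^r := hkey
      _ = (Mx^r)^2 := by ring
  -- Step 4 : cardinality and Gauss sum
  have hcard_r : r = N - k.val := by
    have hfe : Finset.univ.filter (fun t => ¬ p t) = Finset.Ici k := by
      ext a
      simp only [Finset.mem_filter, Finset.mem_univ, true_and, Finset.mem_Ici, hpdef, not_lt,
        Fin.le_def]
    rw [hrdef, hfe, Fin.card_Ici]
  set S := ∑ t ∈ Finset.univ.filter (fun t => ¬ p t), (t.val - k.val) with hSdef
  have hS_univ : S = ∑ t : Fin N, (t.val - k.val) := by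
    rw [hSdef, ← Finset.sum_filter_add_sum_filter_not Finset.univ p
      (fun t : Fin N => t.val - k.val)]
    have h0 : ∑ t ∈ Finset.univ.filter p, (t.val - k.val) = 0 :=
      Finset.sum_eq_zero fun t ht =>
        Nat.sub_eq_zero_of_le (le_of_lt (Finset.mem_filter.mp ht).2)
    rw [h0, zero_add]
  have hGauss : S * 2 = (N - k.val) * (N - k.val - 1) := by
    rw [hS_univ, Fin.sum_univ_eq_sum_range (fun x => x - k.val) N,
      ← Finset.sum_range_add_sum_Ico _ (le_of_lt k.isLt)]
    have h0 : ∑ x ∈ Finset.range k.val, (x - k.val) = 0 :=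
      Finset.sum_eq_zero fun x hx =>
        Nat.sub_eq_zero_of_le (le_of_lt (Finset.mem_range.mp hx))
    rw [h0, zero_add, Finset.sum_Ico_eq_sum_range]
    simp only [Nat.add_sub_cancel_left]
    exact Finset.sum_range_id_mul_two _
  -- chain product
  have hchainprod : ‖cs k‖ ^ r ≤ Real.sqrt α ^ S * Mx ^ r := by
    have h1 : ∀ t ∈ Finset.univ.filter (fun t => ¬ p t),
        ‖cs k‖ ≤ Real.sqrt α ^ (t.val - k.val) * ‖cs t‖ := fun t ht =>
      hchain t (le_of_not_gt (Finset.mem_filter.mp ht).2)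
    calc ‖cs k‖^r = ∏ _t ∈ Finset.univ.filter (fun t => ¬ p t), ‖cs k‖ := by
          rw [Finset.prod_const, hrdef]
      _ ≤ ∏ t ∈ Finset.univ.filter (fun t => ¬ p t),
            (Real.sqrt α ^ (t.val - k.val) * ‖cs t‖) :=
          Finset.prod_le_prod (fun t _ => norm_nonneg _) h1
      _ = (∏ t ∈ Finset.univ.filter (fun t => ¬ p t), Real.sqrt α ^ (t.val - k.val)) *
            (∏ t ∈ Finset.univ.filter (fun t => ¬ p t), ‖cs t‖) := Finset.prod_mul_distrib
      _ = Real.sqrt α ^ S * (∏ t ∈ Finset.univ.filter (fun t => ¬ p t), ‖cs t‖) := by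
          rw [Finset.prod_pow_eq_pow_sum, hSdef]
      _ ≤ Real.sqrt α ^ S * Mx ^ r :=
          mul_le_mul_of_nonneg_left hprod_norm (pow_nonneg (Real.sqrt_nonneg _) _)
  -- Step 5 : final computation with real exponents
  have hrpos : 0 < r := by
    have := k.isLt
    omega
  have hsq : Real.sqrt α ^ S ≤ (α ^ ((N - 1 : ℝ)/4))^r := by
    have e1 : Real.sqrt α ^ S = α ^ ((S : ℝ)/2) := by
      rw [Real.sqrt_eq_rpow, ← Real.rpow_natCast (α ^ ((1:ℝ)/2)) S,
        ← Real.rpow_mul (le_of_lt hα0)]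
      norm_num
      ring_nf
    have e2 : (α ^ ((N - 1 : ℝ)/4))^r = α ^ (((N - 1 : ℝ)/4) * r) := by
      rw [← Real.rpow_natCast (α ^ ((N - 1 : ℝ)/4)) r, ← Real.rpow_mul (le_of_lt hα0)]
    rw [e1, e2]
    apply (Real.rpow_le_rpow_left_iff hα1).mpr
    -- arithmetic : S/2 ≤ (N-1)/4 * r  from  2S = r(r-1),  r ≤ N,  1 ≤ r
    have hrN : r ≤ N := by omega
    have hr1 : 1 ≤ r := hrpos
    have h2S : (S : ℝ) * 2 = (r : ℝ) * ((r : ℝ) - 1) := by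
      have : S * 2 = r * (r - 1) := by rw [hcard_r] at *; exact hGauss
      calc (S:ℝ) * 2 = ((S * 2 : ℕ) : ℝ) := by push_cast; ring
        _ = ((r * (r-1) : ℕ) : ℝ) := by rw [this]
        _ = (r : ℝ) * ((r:ℝ) - 1) := by
            push_cast [Nat.cast_sub hr1]
            ring
    have hrNc : (r : ℝ) ≤ (N : ℝ) := Nat.cast_le.mpr hrN
    have hr1c : (1 : ℝ) ≤ (r : ℝ) := by exact_mod_cast hr1
    nlinarith [mul_nonneg (by linarith : (0:ℝ) ≤ (r:ℝ)) (by linarith : (0:ℝ) ≤ (N:ℝ) - (r:ℝ))]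
  have hfinal : ‖cs k‖^r ≤ (α ^ ((N - 1 : ℝ)/4) * Mx)^r := by
    calc ‖cs k‖^r ≤ Real.sqrt α ^ S * Mx ^ r := hchainprod
      _ ≤ (α ^ ((N - 1 : ℝ)/4))^r * Mx^r :=
          mul_le_mul_of_nonneg_right hsq (pow_nonneg (le_of_lt hMpos) _)
      _ = (α ^ ((N - 1 : ℝ)/4) * Mx)^r := (mul_pow _ _ _).symm
  exact (pow_le_pow_iff_left₀ (norm_nonneg _) (by positivity) (Nat.pos_iff_ne_zero.mp hrpos)).mp
    hfinal
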